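/- arXiv:1705.09167 — 2 statements merged into one kernel-verified Lean document; each statement's English description precedes it below -/
import Mathlib

section
/- For every d there exists a finite poset with boolean dimension at most 4 and local dimension greater than d; that is, there are posets with boolean dimension 4 and unbounded local dimension. -/
/-- `L` is a realizer of the order `le`: a family of linear extensions of `le`
whose intersection is `le`. -/
def IsRealizer {X : Type*} (le : X → X → Prop) {d : ℕ} (L : Fin d → X → X → Prop) : Prop :=
  (∀ i, IsLinearOrder X (L i)) ∧ (∀ (i) (x y : X), le x y → L i x y) ∧
    (∀ x y : X, le x y ↔ ∀ i, L i x y)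

/-- The (Dushnik–Miller) dimension of a poset: the least size of a realizer. -/
noncomputable def orderDim (X : Type*) [PartialOrder X] : ℕ :=
  sInf {d : ℕ | ∃ L : Fin d → X → X → Prop, IsRealizer (· ≤ ·) L}

/-- `L` together with the boolean function `φ` is a boolean realizer of `le`. -/
def IsBooleanRealizer {X : Type*} (le : X → X → Prop) {d : ℕ}
    (L : Fin d → X → X → Prop) (φ : (Fin d → Prop) → Prop) : Prop :=
  (∀ i, IsLinearOrder X (L i)) ∧ ∀ x y : X, le x y ↔ φ (fun i => L i x y)

/-- Boolean dimension of a relation. -/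
noncomputable def booleanDimRel {X : Type*} (le : X → X → Prop) : ℕ :=
  sInf {d : ℕ | ∃ (L : Fin d → X → X → Prop) (φ : (Fin d → Prop) → Prop),
    IsBooleanRealizer le L φ}

/-- Boolean dimension of a poset. -/
noncomputable def booleanDim (X : Type*) [PartialOrder X] : ℕ :=
  booleanDimRel ((· ≤ ·) : X → X → Prop)

/-- A partial linear extension of `le`: a linear order on a subset of `X`
extending the restriction of `le` to that subset. -/
structure PLE {X : Type*} (le : X → X → Prop) where
  dom : Set X
  rel : X → X → Prop
  mem_left : ∀ x y, rel x y → x ∈ dom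
  mem_right : ∀ x y, rel x y → y ∈ dom
  refl : ∀ x ∈ dom, rel x x
  antisymm : ∀ x y, rel x y → rel y x → x = y
  trans : ∀ x y z, rel x y → rel y z → rel x z
  total : ∀ x ∈ dom, ∀ y ∈ dom, rel x y ∨ rel y x
  le_imp : ∀ x ∈ dom, ∀ y ∈ dom, le x y → rel x y

/-- A family of partial linear extensions is a local realizer of `le`:
`x ≤ y` iff no member reverses the pair strictly. -/
def IsLocalRealizer {X : Type*} {le : X → X → Prop} {ι : Type*} (L : ι → PLE le) : Prop :=
  ∀ x y : X, le x y ↔ ∀ i, ¬ ((L i).rel y x ∧ y ≠ x)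

/-- Every element of `X` occurs in the domain of at most `d` members of the family. -/
def WidthAtMost {X : Type*} {le : X → X → Prop} {ι : Type*} (L : ι → PLE le) (d : ℕ) : Prop :=
  ∀ x : X, ({i : ι | x ∈ (L i).dom}).ncard ≤ d

/-- Local dimension of a poset: the least width of a local realizer. -/
noncomputable def localDim (X : Type*) [PartialOrder X] : ℕ :=
  sInf {d : ℕ | ∃ (t : ℕ) (L : Fin t → PLE ((· ≤ ·) : X → X → Prop)),
    IsLocalRealizer L ∧ WidthAtMost L d}


open Finset

section Ramsey
variable {c : ℕ}

lemma fiber_pigeonhole (hc : 0 < c) (f : ℕ → Fin c) (C : Finset ℕ) (m : ℕ)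
    (hm : 0 < m) (h : c * m ≤ C.card) :
    ∃ q : Fin c, m ≤ (C.filter (fun y => f y = q)).card := by
  have hlt : (Finset.univ : Finset (Fin c)).card * (m - 1) < C.card := by
    have hmm : m - 1 + 1 = m := by omega
    have : c * m = c * (m - 1) + c := by
      cases m with
      | zero => omega
      | succ k => simp [Nat.mul_succ]
    simp only [Finset.card_univ, Fintype.card_fin]
    omega
  obtain ⟨q, _, hq⟩ := Finset.exists_lt_card_fiber_of_mul_lt_card_of_maps_to
    (fun a _ => Finset.mem_univ (f a)) hlt
  exact ⟨q, by omega⟩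

lemma refine_aux (hc : 0 < c) (f : ℕ → ℕ → Fin c) :
    ∀ (us : List ℕ) (C : Finset ℕ) (m : ℕ), c ^ us.length * m ≤ C.card →
    ∃ C' : Finset ℕ, C' ⊆ C ∧ m ≤ C'.card ∧
      ∀ u ∈ us, ∀ z ∈ C', ∀ z' ∈ C', f u z = f u z' := by
  intro us
  induction us with
  | nil =>
    intro C m h
    exact ⟨C, Finset.Subset.refl _, by simpa using h, by simp⟩
  | cons u us ih =>
    intro C m h
    rcases Nat.eq_zero_or_pos m with rfl | hm
    · exact ⟨∅, by simp, by simp, by simp⟩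
    obtain ⟨C1, hC1s, hC1c, hC1p⟩ := ih C (c * m) (by
      have : c ^ us.length * (c * m) = c ^ (u :: us).length * m := by
        simp [List.length_cons, pow_succ]; ring
      omega)
    obtain ⟨q, hq⟩ := fiber_pigeonhole hc (f u) C1 m hm hC1c
    refine ⟨C1.filter (fun y => f u y = q), (Finset.filter_subset _ _).trans hC1s, hq, ?_⟩
    intro u' hu' z hz z' hz'
    rcases List.mem_cons.mp hu' with rfl | hu'
    · have h1 := (Finset.mem_filter.mp hz).2
      have h2 := (Finset.mem_filter.mp hz').2
      simp only [h1, h2]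
    · exact hC1p u' hu' z (Finset.mem_filter.mp hz).1 z' (Finset.mem_filter.mp hz').1

/-- bound sequence -/
def RB (c E : ℕ) : ℕ → ℕ
  | 0 => 1
  | r + 1 => 1 + c ^ E * RB c E r

lemma RB_pos (c E r : ℕ) : 0 < RB c E r := by
  cases r <;> simp [RB]

def Inv3 (χ : ℕ → ℕ → ℕ → Fin c) (l C : Finset ℕ) : Prop :=
  (∀ a ∈ l, ∀ y ∈ C, a < y) ∧
  (∀ x ∈ l, ∀ y ∈ l, x < y → ∀ z ∈ C, ∀ z' ∈ C, χ x y z = χ x y z') ∧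
  (∀ x ∈ l, ∀ y ∈ l, ∀ z ∈ l, x < y → y < z → ∀ w ∈ C, χ x y z = χ x y w)

lemma builder3 (hc : 0 < c) (χ : ℕ → ℕ → ℕ → Fin c) (E : ℕ) :
    ∀ (r : ℕ) (l C : Finset ℕ), Inv3 χ l C → l.card + r ≤ E → RB c E r ≤ C.card →
    ∃ A C' : Finset ℕ, l ⊆ A ∧ A \ l ⊆ C ∧ A.card = l.card + r ∧
      Inv3 χ A C' ∧ C'.Nonempty ∧ C' ⊆ C := by
  intro r
  induction r with
  | zero =>
    intro l C hI hE hB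
    exact ⟨l, C, Finset.Subset.refl _, by simp, by simp,
      hI, Finset.card_pos.mp (lt_of_lt_of_le (RB_pos c E 0) hB), Finset.Subset.refl _⟩
  | succ r ih =>
    intro l C hI hE hB
    have hRB : RB c E (r + 1) = 1 + c ^ E * RB c E r := rfl
    have hCne : C.Nonempty := Finset.card_pos.mp (by omega)
    set x := C.min' hCne with hxdef
    have hxC : x ∈ C := C.min'_mem hCne
    have hlx : ∀ a ∈ l, a < x := fun a ha => hI.1 a ha x hxC
    have hxl : x ∉ l := fun h => lt_irrefl x (hlx x h)
    have hcard : c ^ (l.sort (· ≤ ·)).length * RB c E r ≤ (C.erase x).card := by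
      rw [Finset.length_sort, Finset.card_erase_of_mem hxC]
      have h1 : c ^ l.card ≤ c ^ E := Nat.pow_le_pow_right hc (by omega)
      have h2 : c ^ l.card * RB c E r ≤ c ^ E * RB c E r :=
        Nat.mul_le_mul_right _ h1
      omega
    obtain ⟨C', hC'sub, hC'card, hC'prop⟩ :=
      refine_aux hc (fun u y => χ u x y) (l.sort (· ≤ ·)) (C.erase x) (RB c E r) hcard
    have hprop : ∀ u ∈ l, ∀ z ∈ C', ∀ z' ∈ C', χ u x z = χ u x z' := by
      intro u hu
      exact hC'prop u ((Finset.mem_sort _).mpr hu)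
    have hC'C : C' ⊆ C := hC'sub.trans (Finset.erase_subset _ _)
    have hxlt : ∀ y ∈ C', x < y := by
      intro y hy
      have hyC := hC'sub hy
      exact lt_of_le_of_ne (C.min'_le y (Finset.mem_of_mem_erase hyC))
        (Ne.symm (Finset.ne_of_mem_erase hyC))
    have hInv' : Inv3 χ (insert x l) C' := by
      refine ⟨?_, ?_, ?_⟩
      · intro a ha y hy
        rcases Finset.mem_insert.mp ha with rfl | ha
        · exact hxlt y hy
        · exact hI.1 a ha y (hC'C hy)
      · intro a ha b hb hab z hz z' hz'
        rcases Finset.mem_insert.mp ha with rfl | ha <;>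
          rcases Finset.mem_insert.mp hb with rfl | hb
        · omega
        · exact absurd hab (by have := hlx b hb; omega)
        · exact hprop a ha z hz z' hz'
        · exact hI.2.1 a ha b hb hab z (hC'C hz) z' (hC'C hz')
      · intro a ha b hb e he hab hbe w hw
        rcases Finset.mem_insert.mp ha with rfl | ha
        · rcases Finset.mem_insert.mp hb with rfl | hb
          · omega
          · exact absurd hab (by have := hlx b hb; omega)
        · rcases Finset.mem_insert.mp hb with rfl | hb
          · rcases Finset.mem_insert.mp he with rfl | he
            · omega
            · exact absurd hbe (by have := hlx e he; omega)
          · rcases Finset.mem_insert.mp he with rfl | he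
            · exact hI.2.1 a ha b hb hab x hxC w (hC'C hw)
            · exact hI.2.2 a ha b hb e he hab hbe w (hC'C hw)
    have hcardins : (insert x l).card = l.card + 1 := Finset.card_insert_of_notMem hxl
    obtain ⟨A, C'', h1, h2, h3, h4, h5, h6⟩ := ih (insert x l) C' hInv' (by omega) hC'card
    refine ⟨A, C'', (Finset.subset_insert x l).trans h1, ?_, by omega, h4, h5, h6.trans hC'C⟩
    intro a ha
    have haA := (Finset.mem_sdiff.mp ha).1
    have hal := (Finset.mem_sdiff.mp ha).2
    by_cases hax : a = x
    · exact hax ▸ hxC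
    · have : a ∈ A \ insert x l := Finset.mem_sdiff.mpr ⟨haA, by simp [hax, hal]⟩
      exact hC'C (h2 this)

def RB2 (c : ℕ) : ℕ → ℕ
  | 0 => 1
  | r + 1 => 1 + c * RB2 c r

lemma RB2_pos (c r : ℕ) : 0 < RB2 c r := by
  cases r <;> simp [RB2]

def Inv2 (γ : ℕ → ℕ → Fin c) (l C : Finset ℕ) : Prop :=
  (∀ a ∈ l, ∀ y ∈ C, a < y) ∧
  (∀ x ∈ l, ∀ z ∈ C, ∀ z' ∈ C, γ x z = γ x z') ∧
  (∀ x ∈ l, ∀ y ∈ l, x < y → ∀ w ∈ C, γ x y = γ x w)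

lemma builder2 (hc : 0 < c) (γ : ℕ → ℕ → Fin c) :
    ∀ (r : ℕ) (l C : Finset ℕ), Inv2 γ l C → RB2 c r ≤ C.card →
    ∃ A C' : Finset ℕ, l ⊆ A ∧ A \ l ⊆ C ∧ A.card = l.card + r ∧
      Inv2 γ A C' ∧ C'.Nonempty ∧ C' ⊆ C := by
  intro r
  induction r with
  | zero =>
    intro l C hI hB
    exact ⟨l, C, Finset.Subset.refl _, by simp, by simp,
      hI, Finset.card_pos.mp (lt_of_lt_of_le (RB2_pos c 0) hB), Finset.Subset.refl _⟩
  | succ r ih =>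
    intro l C hI hB
    have hRB : RB2 c (r + 1) = 1 + c * RB2 c r := rfl
    have hCne : C.Nonempty := Finset.card_pos.mp (by omega)
    set x := C.min' hCne with hxdef
    have hxC : x ∈ C := C.min'_mem hCne
    have hlx : ∀ a ∈ l, a < x := fun a ha => hI.1 a ha x hxC
    have hxl : x ∉ l := fun h => lt_irrefl x (hlx x h)
    obtain ⟨q, hq⟩ := fiber_pigeonhole hc (γ x) (C.erase x) (RB2 c r) (RB2_pos c r) (by
      rw [Finset.card_erase_of_mem hxC]; omega)
    set C' := (C.erase x).filter (fun y => γ x y = q) with hC'def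
    have hC'sub : C' ⊆ C.erase x := Finset.filter_subset _ _
    have hC'C : C' ⊆ C := hC'sub.trans (Finset.erase_subset _ _)
    have hxlt : ∀ y ∈ C', x < y := by
      intro y hy
      have hyC := hC'sub hy
      exact lt_of_le_of_ne (C.min'_le y (Finset.mem_of_mem_erase hyC))
        (Ne.symm (Finset.ne_of_mem_erase hyC))
    have hInv' : Inv2 γ (insert x l) C' := by
      refine ⟨?_, ?_, ?_⟩
      · intro a ha y hy
        rcases Finset.mem_insert.mp ha with rfl | ha
        · exact hxlt y hy
        · exact hI.1 a ha y (hC'C hy)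
      · intro a ha z hz z' hz'
        rcases Finset.mem_insert.mp ha with rfl | ha
        · have h1 := (Finset.mem_filter.mp hz).2
          have h2 := (Finset.mem_filter.mp hz').2
          simp only [h1, h2]
        · exact hI.2.1 a ha z (hC'C hz) z' (hC'C hz')
      · intro a ha b hb hab w hw
        rcases Finset.mem_insert.mp ha with rfl | ha
        · rcases Finset.mem_insert.mp hb with rfl | hb
          · omega
          · exact absurd hab (by have := hlx b hb; omega)
        · rcases Finset.mem_insert.mp hb with rfl | hb
          · exact hI.2.1 a ha x hxC w (hC'C hw)
          · exact hI.2.2 a ha b hb hab w (hC'C hw)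
    have hcardins : (insert x l).card = l.card + 1 := Finset.card_insert_of_notMem hxl
    obtain ⟨A, C'', h1, h2, h3, h4, h5, h6⟩ := ih (insert x l) C' hInv' hq
    refine ⟨A, C'', (Finset.subset_insert x l).trans h1, ?_, by omega, h4, h5, h6.trans hC'C⟩
    intro a ha
    have haA := (Finset.mem_sdiff.mp ha).1
    have hal := (Finset.mem_sdiff.mp ha).2
    by_cases hax : a = x
    · exact hax ▸ hxC
    · have : a ∈ A \ insert x l := Finset.mem_sdiff.mpr ⟨haA, by simp [hax, hal]⟩
      exact hC'C (h2 this)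

lemma four_elts (F : Finset ℕ) (h : 4 ≤ F.card) :
    ∃ a b e f, a ∈ F ∧ b ∈ F ∧ e ∈ F ∧ f ∈ F ∧ a < b ∧ b < e ∧ e < f := by
  have h1 : F.Nonempty := Finset.card_pos.mp (by omega)
  set a := F.min' h1 with ha
  have haF := F.min'_mem h1
  set F1 := F.erase a with hF1
  have hc1 : 3 ≤ F1.card := by rw [hF1, Finset.card_erase_of_mem haF]; omega
  have h2 : F1.Nonempty := Finset.card_pos.mp (by omega)
  set b := F1.min' h2 with hb
  have hbF1 := F1.min'_mem h2
  set F2 := F1.erase b with hF2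
  have hc2 : 2 ≤ F2.card := by rw [hF2, Finset.card_erase_of_mem hbF1]; omega
  have h3 : F2.Nonempty := Finset.card_pos.mp (by omega)
  set e := F2.min' h3 with he
  have heF2 := F2.min'_mem h3
  set F3 := F2.erase e with hF3
  have hc3 : 1 ≤ F3.card := by rw [hF3, Finset.card_erase_of_mem heF2]; omega
  have h4 : F3.Nonempty := Finset.card_pos.mp (by omega)
  set f := F3.min' h4 with hf
  have hfF3 := F3.min'_mem h4
  have hbF : b ∈ F := Finset.mem_of_mem_erase hbF1
  have heF1 : e ∈ F1 := Finset.mem_of_mem_erase heF2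
  have heF : e ∈ F := Finset.mem_of_mem_erase heF1
  have hfF2 : f ∈ F2 := Finset.mem_of_mem_erase hfF3
  have hfF1 : f ∈ F1 := Finset.mem_of_mem_erase hfF2
  have hfF : f ∈ F := Finset.mem_of_mem_erase hfF1
  refine ⟨a, b, e, f, haF, hbF, heF, hfF, ?_, ?_, ?_⟩
  · exact lt_of_le_of_ne (F.min'_le b hbF) (Ne.symm (Finset.ne_of_mem_erase hbF1))
  · exact lt_of_le_of_ne (F1.min'_le e heF1) (Ne.symm (Finset.ne_of_mem_erase heF2))
  · exact lt_of_le_of_ne (F2.min'_le f hfF2) (Ne.symm (Finset.ne_of_mem_erase hfF3))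

/-- 3-uniform hypergraph Ramsey: monochromatic 4-set. -/
lemma ramsey4 (hc : 0 < c) (χ : ℕ → ℕ → ℕ → Fin c) (C : Finset ℕ)
    (hcard : RB c (RB2 c (4 * c) + 1) (RB2 c (4 * c) + 1) ≤ C.card) :
    ∃ u v w x, u ∈ C ∧ v ∈ C ∧ w ∈ C ∧ x ∈ C ∧ u < v ∧ v < w ∧ w < x ∧
      χ u v w = χ u v x ∧ χ u v w = χ u w x ∧ χ u v w = χ v w x := by
  set s3 := RB2 c (4 * c) + 1 with hs3
  obtain ⟨A3, C3, _, hA3C, hA3card, hInv3, ⟨w3, hw3⟩, hC3C⟩ :=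
    builder3 hc χ s3 s3 ∅ C ⟨by simp, by simp, by simp⟩ (by simp) hcard
  have hA3sub : A3 ⊆ C := by
    intro a ha; exact hA3C (by simp [Finset.mem_sdiff, ha])
  -- γ: pair coloring
  set γ : ℕ → ℕ → Fin c := fun a b => χ a b w3 with hγ
  have hchi : ∀ a ∈ A3, ∀ b ∈ A3, ∀ e ∈ A3, a < b → b < e → χ a b e = γ a b := by
    intro a ha b hb e he hab hbe
    exact hInv3.2.2 a ha b hb e he hab hbe w3 hw3
  have hA3card' : RB2 c (4 * c) ≤ A3.card := by
    simp only [hs3, Finset.card_empty, Nat.zero_add] at hA3card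
    omega
  obtain ⟨A2, C2, _, hA2A3', hA2card, hInv2, ⟨w2, hw2⟩, hC2A3⟩ :=
    builder2 hc γ (4 * c) ∅ A3 ⟨by simp, by simp, by simp⟩ hA3card'
  have hA2A3 : A2 ⊆ A3 := by
    intro a ha; exact hA2A3' (by simp [Finset.mem_sdiff, ha])
  have hw2A3 : w2 ∈ A3 := hC2A3 hw2
  have hγpair : ∀ a ∈ A2, ∀ b ∈ A2, a < b → γ a b = γ a w2 := by
    intro a ha b hb hab
    exact hInv2.2.2 a ha b hb hab w2 hw2
  -- pigeonhole on δ
  obtain ⟨q, hq⟩ := fiber_pigeonhole hc (fun a => γ a w2) A2 4 (by omega) (by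
    simp at hA2card; omega)
  obtain ⟨u, v, w, x, hu, hv, hw, hx, huv, hvw, hwx⟩ := four_elts _ hq
  have hmem : ∀ y ∈ (A2.filter (fun a => γ a w2 = q)), y ∈ A2 ∧ γ y w2 = q :=
    fun y hy => ⟨(Finset.mem_filter.mp hy).1, (Finset.mem_filter.mp hy).2⟩
  obtain ⟨huA2, huδ⟩ := hmem u hu
  obtain ⟨hvA2, hvδ⟩ := hmem v hv
  obtain ⟨hwA2, hwδ⟩ := hmem w hw
  obtain ⟨hxA2, hxδ⟩ := hmem x hx
  have hpair : ∀ a ∈ A2, ∀ b ∈ A2, a < b → γ a w2 = q → γ a b = q := by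
    intro a ha b hb hab haq
    rw [hγpair a ha b hb hab]; exact haq
  have huA3 := hA2A3 huA2
  have hvA3 := hA2A3 hvA2
  have hwA3 := hA2A3 hwA2
  have hxA3 := hA2A3 hxA2
  refine ⟨u, v, w, x, hA3sub huA3, hA3sub hvA3, hA3sub hwA3, hA3sub hxA3, huv, hvw, hwx,
    ?_, ?_, ?_⟩
  · rw [hchi u huA3 v hvA3 w hwA3 huv hvw, hchi u huA3 v hvA3 x hxA3 huv (by omega)]
  · rw [hchi u huA3 v hvA3 w hwA3 huv hvw, hchi u huA3 w hwA3 x hxA3 (by omega) hwx,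
      hpair u huA2 v hvA2 huv huδ, hpair u huA2 w hwA2 (by omega) huδ]
  · rw [hchi u huA3 v hvA3 w hwA3 huv hvw, hchi v hvA3 w hwA3 x hxA3 hvw hwx,
      hpair u huA2 v hvA2 huv huδ, hpair v hvA2 w hwA2 hvw hvδ]

end Ramsey

section Poset

abbrev Edg (n : ℕ) := {p : Fin n × Fin n // p.1 < p.2}

structure XP (n : ℕ) where
  val : Fin n ⊕ Edg n

def pole (n : ℕ) : XP n → XP n → Prop
  | ⟨.inl v⟩, ⟨.inl w⟩ => v = w
  | ⟨.inl v⟩, ⟨.inr e⟩ => v = e.1.1 ∨ v = e.1.2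
  | ⟨.inr _⟩, ⟨.inl _⟩ => False
  | ⟨.inr e⟩, ⟨.inr f⟩ => e = f

instance poInst (n : ℕ) : PartialOrder (XP n) where
  le := pole n
  lt x y := pole n x y ∧ ¬ pole n y x
  lt_iff_le_not_ge _ _ := Iff.rfl
  le_refl x := by obtain ⟨v | e⟩ := x <;> simp [pole]
  le_trans x y z hxy hyz := by
    obtain ⟨vx | ex⟩ := x <;> obtain ⟨vy | ey⟩ := y <;> obtain ⟨vz | ez⟩ := z <;>
      simp_all [pole]
  le_antisymm x y hxy hyx := by
    obtain ⟨vx | ex⟩ := x <;> obtain ⟨vy | ey⟩ := y <;> simp_all [pole]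

lemma pole_le {n : ℕ} (x y : XP n) : x ≤ y ↔ pole n x y := Iff.rfl

instance (n : ℕ) : Fintype (XP n) :=
  Fintype.ofEquiv (Fin n ⊕ Edg n) ⟨XP.mk, XP.val, fun _ => rfl, fun _ => rfl⟩

def lexLe (a b : ℕ × ℕ × ℕ) : Prop :=
  a.1 < b.1 ∨ (a.1 = b.1 ∧ (a.2.1 < b.2.1 ∨ (a.2.1 = b.2.1 ∧ a.2.2 ≤ b.2.2)))

lemma lexLe_linear {X : Type*} (f : X → ℕ × ℕ × ℕ) (hf : Function.Injective f) :
    IsLinearOrder X (fun x y => lexLe (f x) (f y)) := by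
  refine { refl := ?_, trans := ?_, antisymm := ?_, total := ?_ }
  · intro x; unfold lexLe; omega
  · intro x y z h1 h2; unfold lexLe at h1 h2 ⊢; omega
  · intro x y h1 h2
    apply hf
    unfold lexLe at h1 h2
    have h3 : (f x).1 = (f y).1 ∧ (f x).2.1 = (f y).2.1 ∧ (f x).2.2 = (f y).2.2 := by omega
    exact Prod.ext h3.1 (Prod.ext h3.2.1 h3.2.2)
  · intro x y; unfold lexLe; omega

def kf (n : ℕ) : Fin 4 → XP n → ℕ × ℕ × ℕ
  | 0, ⟨.inl v⟩ => (v.1, 0, 0)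
  | 0, ⟨.inr e⟩ => (e.1.1.1, 1, e.1.2.1)
  | 1, ⟨.inl v⟩ => (n - v.1, 0, 0)
  | 1, ⟨.inr e⟩ => (n - e.1.1.1, 1, n - e.1.2.1)
  | 2, ⟨.inl v⟩ => (v.1, 0, 0)
  | 2, ⟨.inr e⟩ => (e.1.2.1, 1, e.1.1.1)
  | 3, ⟨.inl v⟩ => (n - v.1, 0, 0)
  | 3, ⟨.inr e⟩ => (n - e.1.2.1, 1, n - e.1.1.1)

lemma kf_inj (n : ℕ) (i : Fin 4) : Function.Injective (kf n i) := by
  intro x y h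
  fin_cases i <;>
    obtain ⟨⟨v, hv⟩ | ⟨⟨⟨a, ha⟩, ⟨b, hb⟩⟩, hab⟩⟩ := x <;>
    obtain ⟨⟨w, hw⟩ | ⟨⟨⟨a', ha'⟩, ⟨b', hb'⟩⟩, hab'⟩⟩ := y <;>
    simp_all [kf, Prod.ext_iff, Fin.ext_iff, Subtype.ext_iff, Fin.mk_lt_mk] <;>
    omega

def bor (n : ℕ) : Fin 4 → XP n → XP n → Prop :=
  fun i x y => lexLe (kf n i x) (kf n i y)

lemma bor_realizes (n : ℕ) :
    IsBooleanRealizer (pole n) (bor n) (fun p => (p 0 ∧ p 1) ∨ (p 2 ∧ p 3)) := by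
  constructor
  · intro i
    exact lexLe_linear (kf n i) (kf_inj n i)
  · intro x y
    obtain ⟨⟨v, hv⟩ | ⟨⟨⟨a, ha⟩, ⟨b, hb⟩⟩, hab⟩⟩ := x <;>
      obtain ⟨⟨w, hw⟩ | ⟨⟨⟨a', ha'⟩, ⟨b', hb'⟩⟩, hab'⟩⟩ := y <;>
      simp_all [pole, bor, lexLe, kf, Prod.ext_iff, Fin.ext_iff, Subtype.ext_iff,
        Fin.mk_lt_mk, Fin.isValue] <;>
      omega

lemma booleanDim_le_four (n : ℕ) : booleanDim (XP n) ≤ 4 :=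
  Nat.sInf_le ⟨bor n, fun p => (p 0 ∧ p 1) ∨ (p 2 ∧ p 3), bor_realizes n⟩

end Poset

section LocalUpper

variable {X : Type*} (le : X → X → Prop)

def pairPLE (a b : X) : PLE le where
  dom := {x | x = a ∨ (x = b ∧ ¬(le b a ∧ b ≠ a))}
  rel u v := (u = v ∧ (v = a ∨ (v = b ∧ ¬(le b a ∧ b ≠ a)))) ∨
    (u = a ∧ v = b ∧ ¬(le b a ∧ b ≠ a))
  mem_left := by
    rintro x y (⟨rfl, h⟩ | ⟨rfl, rfl, h⟩)
    · exact h
    · exact Or.inl rfl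
  mem_right := by
    rintro x y (⟨rfl, h⟩ | ⟨rfl, rfl, h⟩)
    · exact h
    · exact Or.inr ⟨rfl, h⟩
  refl := by
    intro x hx; exact Or.inl ⟨rfl, hx⟩
  antisymm := by
    rintro x y (⟨rfl, h⟩ | ⟨rfl, rfl, h⟩) h2
    · rfl
    · rcases h2 with ⟨rfl, h2⟩ | ⟨h2a, h2b, h2c⟩
      · rfl
      · rw [h2a, h2b]
  trans := by
    rintro x y z (⟨rfl, h⟩ | ⟨rfl, rfl, h⟩) h2
    · exact h2
    · rcases h2 with ⟨rfl, h2⟩ | ⟨h2a, h2b, h2c⟩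
      · exact Or.inr ⟨rfl, rfl, h⟩
      · exact Or.inr ⟨rfl, h2b, h2c⟩
  total := by
    intro x hx y hy
    rcases hx with hx1 | ⟨hx1, hx2⟩ <;> rcases hy with hy1 | ⟨hy1, hy2⟩
    · exact Or.inl (Or.inl ⟨hx1.trans hy1.symm, Or.inl hy1⟩)
    · exact Or.inl (Or.inr ⟨hx1, hy1, hy2⟩)
    · exact Or.inr (Or.inr ⟨hy1, hx1, hx2⟩)
    · exact Or.inl (Or.inl ⟨hx1.trans hy1.symm, Or.inr ⟨hy1, hy2⟩⟩)
  le_imp := by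
    intro x hx y hy hxy
    rcases hx with hx1 | ⟨hx1, hx2⟩ <;> rcases hy with hy1 | ⟨hy1, hy2⟩
    · exact Or.inl ⟨hx1.trans hy1.symm, Or.inl hy1⟩
    · exact Or.inr ⟨hx1, hy1, hy2⟩
    · by_cases hab : b = a
      · exact Or.inl ⟨hx1.trans (hab.trans hy1.symm), Or.inl hy1⟩
      · exact absurd ⟨by rw [← hx1, ← hy1]; exact hxy, hab⟩ hx2
    · exact Or.inl ⟨hx1.trans hy1.symm, Or.inr ⟨hy1, hy2⟩⟩

lemma exists_local_realizer (X : Type*) [Fintype X] [PartialOrder X] :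
    ∃ (t : ℕ) (L : Fin t → PLE ((· ≤ ·) : X → X → Prop)),
      IsLocalRealizer L ∧ WidthAtMost L t := by
  classical
  set t := Fintype.card (X × X) with ht
  set e := (Fintype.equivFin (X × X)).symm with he
  refine ⟨t, fun i => pairPLE (· ≤ ·) (e i).1 (e i).2, ?_, ?_⟩
  · intro x y
    constructor
    · rintro hxy i ⟨hrel, hne⟩
      rcases hrel with ⟨rfl, _⟩ | ⟨h1, h2, h3⟩
      · exact hne rfl
      · exact h3 ⟨h2 ▸ h1 ▸ hxy, fun hc => hne (h2.symm ▸ h1.symm ▸ hc.symm ▸ rfl)⟩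
    · intro hall
      by_contra hnxy
      have hne : x ≠ y := fun hc => hnxy (hc ▸ le_refl x)
      refine hall (e.symm (y, x)) ⟨?_, hne.symm⟩
      have hyx : (e (e.symm (y, x))) = (y, x) := e.apply_symm_apply _
      exact Or.inr (by rw [hyx]; exact ⟨rfl, rfl, fun hc => hnxy hc.1⟩)
  · intro x
    have h1 : {i : Fin t | x ∈ (pairPLE (· ≤ ·) (e i).1 (e i).2).dom} ⊆ Set.univ :=
      Set.subset_univ _
    calc ({i : Fin t | x ∈ (pairPLE (· ≤ ·) (e i).1 (e i).2).dom}).ncard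
        ≤ (Set.univ : Set (Fin t)).ncard := Set.ncard_le_ncard h1 Set.finite_univ
      _ = t := by rw [Set.ncard_univ, Nat.card_eq_fintype_card, Fintype.card_fin]

end LocalUpper

section Lower

lemma digit_lt {d a b : ℕ} (ha : a < d) (hb : b < d) : a * d + b < d * d + 1 := by
  have h1 : (a + 1) * d ≤ d * d := Nat.mul_le_mul_right d (by omega)
  have h2 : (a + 1) * d = a * d + d := Nat.succ_mul a d
  omega

lemma digit_inj {d a b a' b' : ℕ} (ha : a < d) (hb : b < d) (ha' : a' < d) (hb' : b' < d)
    (h : a * d + b = a' * d + b') : a = a' ∧ b = b' := by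
  have haa : a = a' := by
    by_contra hne
    rcases Nat.lt_or_ge a a' with hlt | hge
    · have h1 : (a + 1) * d ≤ a' * d := Nat.mul_le_mul_right d (by omega)
      have h2 : (a + 1) * d = a * d + d := Nat.succ_mul a d
      omega
    · have hlt : a' < a := by omega
      have h1 : (a' + 1) * d ≤ a * d := Nat.mul_le_mul_right d (by omega)
      have h2 : (a' + 1) * d = a' * d + d := Nat.succ_mul a' d
      omega
  subst haa
  exact ⟨rfl, by omega⟩

lemma no_narrow_realizer (d n : ℕ)
    (hn : RB (d * d + 1) (RB2 (d * d + 1) (4 * (d * d + 1)) + 1)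
      (RB2 (d * d + 1) (4 * (d * d + 1)) + 1) ≤ n)
    {t : ℕ} (L : Fin t → PLE ((· ≤ ·) : XP n → XP n → Prop))
    (hreal : IsLocalRealizer L) (hwid : WidthAtMost L d) : False := by
  classical
  have hcpos : 0 < d * d + 1 := by omega
  -- the S sets and positions
  set S : XP n → Finset (Fin t) := fun x => Finset.univ.filter (fun i => x ∈ (L i).dom)
    with hSdef
  have hSmem : ∀ (x : XP n) (i : Fin t), i ∈ S x ↔ x ∈ (L i).dom := by
    intro x i; simp [hSdef]
  have hScard : ∀ x : XP n, (S x).card ≤ d := by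
    intro x
    have h1 := hwid x
    have h2 : {i : Fin t | x ∈ (L i).dom} = ↑(S x) := by ext i; simp [hSdef]
    rwa [h2, Set.ncard_coe_finset] at h1
  set pos : XP n → Fin t → ℕ := fun x i => ((S x).filter (fun j => j < i)).card with hposdef
  have hposmono : ∀ (x : XP n) (i j : Fin t), i ∈ S x → i < j → pos x i < pos x j := by
    intro x i j hi hij
    have hsub : (S x).filter (fun k => k < i) ⊆ (S x).filter (fun k => k < j) := by
      intro k hk
      simp only [Finset.mem_filter] at *
      exact ⟨hk.1, lt_trans hk.2 hij⟩
    have hmem2 : i ∈ (S x).filter (fun k => k < j) := by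
      simp only [Finset.mem_filter]; exact ⟨hi, hij⟩
    have hnmem : i ∉ (S x).filter (fun k => k < i) := by simp
    exact Finset.card_lt_card ((Finset.ssubset_iff_of_subset hsub).mpr ⟨i, hmem2, hnmem⟩)
  have hposlt : ∀ (x : XP n) (i : Fin t), i ∈ S x → pos x i < d := by
    intro x i hi
    have h1 : pos x i < (S x).card := by
      apply Finset.card_lt_card
      refine (Finset.ssubset_iff_of_subset (Finset.filter_subset _ _)).mpr ⟨i, hi, by simp⟩
    exact lt_of_lt_of_le h1 (hScard x)
  have hposinj : ∀ (x : XP n) (i j : Fin t), i ∈ S x → j ∈ S x → pos x i = pos x j → i = j := by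
    intro x i j hi hj hp
    rcases lt_trichotomy i j with h | h | h
    · exact absurd (hposmono x i j hi h) (by omega)
    · exact h
    · exact absurd (hposmono x j i hj h) (by omega)
  -- vertices and edges
  let V : ∀ u : ℕ, u < n → XP n := fun u h => ⟨.inl ⟨u, h⟩⟩
  let E : ∀ u w : ℕ, u < w → w < n → XP n :=
    fun u w h1 h2 => ⟨.inr ⟨(⟨u, lt_trans h1 h2⟩, ⟨w, h2⟩), h1⟩⟩
  -- reversal picks
  have hrev : ∀ u v w (h1 : u < v) (h2 : v < w) (h3 : w < n),
      ∃ i, (L i).rel (E u w (lt_trans h1 h2) h3) (V v (lt_trans h2 h3)) := by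
    intro u v w h1 h2 h3
    have hnle : ¬ (V v (lt_trans h2 h3) ≤ E u w (lt_trans h1 h2) h3) := by
      rw [pole_le]
      simp only [pole, V, E, Fin.ext_iff]
      omega
    by_contra hno
    push_neg at hno
    exact hnle ((hreal _ _).mpr (fun i hcon => hno i hcon.1))
  choose pick hpick using hrev
  have hpickV : ∀ u v w (h1 : u < v) (h2 : v < w) (h3 : w < n),
      pick u v w h1 h2 h3 ∈ S (V v (lt_trans h2 h3)) := by
    intro u v w h1 h2 h3
    rw [hSmem]
    exact (L _).mem_right _ _ (hpick u v w h1 h2 h3)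
  have hpickE : ∀ u v w (h1 : u < v) (h2 : v < w) (h3 : w < n),
      pick u v w h1 h2 h3 ∈ S (E u w (lt_trans h1 h2) h3) := by
    intro u v w h1 h2 h3
    rw [hSmem]
    exact (L _).mem_left _ _ (hpick u v w h1 h2 h3)
  -- the coloring
  set χ : ℕ → ℕ → ℕ → Fin (d * d + 1) := fun u v w =>
    if h : u < v ∧ v < w ∧ w < n then
      ⟨pos (V v (lt_trans h.2.1 h.2.2)) (pick u v w h.1 h.2.1 h.2.2) * d
        + pos (E u w (lt_trans h.1 h.2.1) h.2.2) (pick u v w h.1 h.2.1 h.2.2),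
        digit_lt (hposlt _ _ (hpickV u v w h.1 h.2.1 h.2.2))
          (hposlt _ _ (hpickE u v w h.1 h.2.1 h.2.2))⟩
    else ⟨0, hcpos⟩ with hχdef
  obtain ⟨u, v, w, x, hu, hv, hw, hx, huv, hvw, hwx, he1, he2, he3⟩ :=
    ramsey4 hcpos χ (Finset.range n) (by rwa [Finset.card_range])
  have hwn : w < n := Finset.mem_range.mp hw
  have hxn : x < n := Finset.mem_range.mp hx
  have hc1 : u < v ∧ v < w ∧ w < n := ⟨huv, hvw, hwn⟩
  have hc2 : u < v ∧ v < x ∧ x < n := ⟨huv, lt_trans hvw hwx, hxn⟩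
  have hc3 : u < w ∧ w < x ∧ x < n := ⟨lt_trans huv hvw, hwx, hxn⟩
  have hc4 : v < w ∧ w < x ∧ x < n := ⟨hvw, hwx, hxn⟩
  rw [hχdef] at he1 he2 he3
  simp only [dif_pos hc1, dif_pos hc2, dif_pos hc3, dif_pos hc4, Fin.mk.injEq] at he1 he2 he3
  -- decompose digits
  have hd1 := digit_inj (hposlt _ _ (hpickV u v w hc1.1 hc1.2.1 hc1.2.2))
    (hposlt _ _ (hpickE u v w hc1.1 hc1.2.1 hc1.2.2))
    (hposlt _ _ (hpickV u v x hc2.1 hc2.2.1 hc2.2.2))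
    (hposlt _ _ (hpickE u v x hc2.1 hc2.2.1 hc2.2.2)) he1
  have hd2 := digit_inj (hposlt _ _ (hpickV u v w hc1.1 hc1.2.1 hc1.2.2))
    (hposlt _ _ (hpickE u v w hc1.1 hc1.2.1 hc1.2.2))
    (hposlt _ _ (hpickV u w x hc3.1 hc3.2.1 hc3.2.2))
    (hposlt _ _ (hpickE u w x hc3.1 hc3.2.1 hc3.2.2)) he2
  have hd3 := digit_inj (hposlt _ _ (hpickV u v w hc1.1 hc1.2.1 hc1.2.2))
    (hposlt _ _ (hpickE u v w hc1.1 hc1.2.1 hc1.2.2))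
    (hposlt _ _ (hpickV v w x hc4.1 hc4.2.1 hc4.2.2))
    (hposlt _ _ (hpickE v w x hc4.1 hc4.2.1 hc4.2.2)) he3
  -- equal picks
  have hi12 : pick u v w hc1.1 hc1.2.1 hc1.2.2 = pick u v x hc2.1 hc2.2.1 hc2.2.2 :=
    hposinj _ _ _ (hpickV u v w hc1.1 hc1.2.1 hc1.2.2)
      (hpickV u v x hc2.1 hc2.2.1 hc2.2.2) hd1.1
  have hi23 : pick u v x hc2.1 hc2.2.1 hc2.2.2 = pick u w x hc3.1 hc3.2.1 hc3.2.2 :=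
    hposinj _ _ _ (hpickE u v x hc2.1 hc2.2.1 hc2.2.2)
      (hpickE u w x hc3.1 hc3.2.1 hc3.2.2) (by rw [← hd2.2, ← hd1.2])
  have hi34 : pick u w x hc3.1 hc3.2.1 hc3.2.2 = pick v w x hc4.1 hc4.2.1 hc4.2.2 :=
    hposinj _ _ _ (hpickV u w x hc3.1 hc3.2.1 hc3.2.2)
      (hpickV v w x hc4.1 hc4.2.1 hc4.2.2) (by rw [← hd2.1, ← hd3.1])
  set i := pick u v w hc1.1 hc1.2.1 hc1.2.2 with hidef
  have r1 : (L i).rel (E u w (lt_trans huv hvw) hwn) (V v (lt_trans hvw hwn)) :=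
    hpick u v w hc1.1 hc1.2.1 hc1.2.2
  have r4 : (L i).rel (E v x (lt_trans hvw hwx) hxn) (V w (lt_trans hwx hxn)) := by
    rw [hi12, hi23, hi34]
    exact hpick v w x hc4.1 hc4.2.1 hc4.2.2
  have mVv : V v (lt_trans hvw hwn) ∈ (L i).dom := (L i).mem_right _ _ r1
  have mEuw : E u w (lt_trans huv hvw) hwn ∈ (L i).dom := (L i).mem_left _ _ r1
  have mVw : V w (lt_trans hwx hxn) ∈ (L i).dom := (L i).mem_right _ _ r4
  have mEvx : E v x (lt_trans hvw hwx) hxn ∈ (L i).dom := (L i).mem_left _ _ r4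
  have le1 : V v (lt_trans hvw hwn) ≤ E v x (lt_trans hvw hwx) hxn := by
    rw [pole_le]; exact Or.inl rfl
  have le2 : V w (lt_trans hwx hxn) ≤ E u w (lt_trans huv hvw) hwn := by
    rw [pole_le]; exact Or.inr rfl
  have r2 : (L i).rel (V v (lt_trans hvw hwn)) (E v x (lt_trans hvw hwx) hxn) :=
    (L i).le_imp _ mVv _ mEvx le1
  have r5 : (L i).rel (V w (lt_trans hwx hxn)) (E u w (lt_trans huv hvw) hwn) :=
    (L i).le_imp _ mVw _ mEuw le2
  have r6 := (L i).trans _ _ _ r1 r2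
  have r7 := (L i).trans _ _ _ r4 r5
  have heq := (L i).antisymm _ _ r6 r7
  simp only [E, XP.mk.injEq, Sum.inr.injEq, Subtype.mk.injEq, Prod.mk.injEq,
    Fin.mk.injEq] at heq
  omega

end Lower


/-- For every `d` there exists a finite poset with boolean dimension
at most `4` and local dimension greater than `d`. -/
theorem boolean_dim_four_local_dim_unbounded (d : ℕ) :
    ∃ (X : Type) (_ : Fintype X) (po : PartialOrder X),
      @booleanDim X po ≤ 4 ∧ d < @localDim X po := by
  set n := RB (d * d + 1) (RB2 (d * d + 1) (4 * (d * d + 1)) + 1)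
    (RB2 (d * d + 1) (4 * (d * d + 1)) + 1) with hndef
  refine ⟨XP n, inferInstance, poInst n, booleanDim_le_four n, ?_⟩
  have hS : {w : ℕ | ∃ (t : ℕ) (L : Fin t → PLE ((· ≤ ·) : XP n → XP n → Prop)),
      IsLocalRealizer L ∧ WidthAtMost L w}.Nonempty := by
    obtain ⟨t, L, h1, h2⟩ := exists_local_realizer (XP n)
    exact ⟨t, t, L, h1, h2⟩
  by_contra hcon
  push_neg at hcon
  obtain ⟨t, L, hreal, hwid⟩ := Nat.sInf_mem hS
  have hwd : WidthAtMost L d := fun x => le_trans (hwid x) hcon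
  exact no_narrow_realizer d n (le_of_eq hndef.symm) L hreal hwd
end

section
/- Let G = (V, E) be a finite acyclic directed graph and ≤ a partial order on E such that for all edges uv, vw, wx ∈ E (forming a directed path) one has uv < wx and uv ≰ vw. If ≤ has a boolean realizer of size d, then the second arc digraph G'' of G (whose vertices are the directed paths uvw of length 2 in G, with uvw adjacent to vwx whenever uv, vw, wx ∈ E) has chromatic number at most 2^d. Consequently, if the chromatic number of G'' exceeds 2^d, then the boolean dimension of (E, ≤) exceeds d. -/
/-- The edge set of a directed graph `(V, E)`, as a type. -/
def Edges {V : Type*} (E : V → V → Prop) : Type _ := {p : V × V // E p.1 p.2}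

/-- The vertices of the second arc digraph `G''` of `G = (V, E)`: directed paths
`uvw` of length 2 in `G`, i.e. pairs of consecutive edges. -/
def Paths2 {V : Type*} (E : V → V → Prop) : Type _ :=
  {p : Edges E × Edges E // p.1.1.2 = p.2.1.1}

section Aux
variable {X : Type*}

lemma aux_vec {le : X → X → Prop} {d : ℕ} {L : Fin d → X → X → Prop}
    {φ : (Fin d → Prop) → Prop} (h : IsBooleanRealizer le L φ)
    {e f g : X} (hleg : le e g) (hne : e ≠ g) (hnef : ¬ le e f)
    (heq : ∀ i, L i e f ↔ L i f g) : False := by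
  obtain ⟨hlin, hiff⟩ := h
  have hfun : (fun i => L i e g) = (fun i => L i e f) := by
    funext i
    haveI := hlin i
    by_cases hef : L i e f
    · have hfg : L i f g := (heq i).1 hef
      exact propext (iff_of_true (Trans.trans hef hfg) hef)
    · have hfg : ¬ L i f g := fun h' => hef ((heq i).2 h')
      have hfe : L i f e := (total_of (L i) f e).resolve_right (fun h' => hef h')
      have hgf : L i g f := (total_of (L i) g f).resolve_right hfg
      have hge : L i g e := Trans.trans hgf hfe
      have : ¬ L i e g := fun h' => hne (antisymm h' hge)
      exact propext (iff_of_false this hef)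
  have h1 : φ (fun i => L i e g) := (hiff e g).1 hleg
  rw [hfun] at h1
  exact hnef ((hiff e f).2 h1)

lemma exists_boolean_realizer [Finite X] (le : X → X → Prop) (hpo : IsPartialOrder X le) :
    ∃ (t : ℕ) (L : Fin t → X → X → Prop) (φ : (Fin t → Prop) → Prop),
      IsBooleanRealizer le L φ := by
  classical
  haveI := hpo
  haveI := Fintype.ofFinite (X × X)
  obtain ⟨s₀, hs₀lin, hs₀ext⟩ := extend_partialOrder le
  have key : ∀ p : X × X, ∃ s, IsLinearOrder X s ∧ (∀ a b, le a b → s a b) ∧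
      (¬ le p.1 p.2 → ¬ s p.1 p.2) := by
    rintro ⟨x, y⟩
    by_cases hxy : le x y
    · exact ⟨s₀, hs₀lin, fun a b h => hs₀ext a b h, fun h => absurd hxy h⟩
    · set r : X → X → Prop := fun a b => le a b ∨ (le a y ∧ le x b) with hr
      have hrpo : IsPartialOrder X r := by
        refine { refl := fun a => Or.inl (hpo.refl a), trans := ?_, antisymm := ?_ }
        · rintro a b c (hab | ⟨hay, hxb⟩) (hbc | ⟨hby, hxc⟩)
          · exact Or.inl (hpo.trans _ _ _ hab hbc)
          · exact Or.inr ⟨hpo.trans _ _ _ hab hby, hxc⟩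
          · exact Or.inr ⟨hay, hpo.trans _ _ _ hxb hbc⟩
          · exact absurd (hpo.trans _ _ _ hxb hby) hxy
        · rintro a b (hab | ⟨hay, hxb⟩) (hba | ⟨hby, hxa⟩)
          · exact hpo.antisymm _ _ hab hba
          · exact absurd (hpo.trans _ _ _ hxa (hpo.trans _ _ _ hab hby)) hxy
          · exact absurd (hpo.trans _ _ _ hxb (hpo.trans _ _ _ hba hay)) hxy
          · exact absurd (hpo.trans _ _ _ hxb hby) hxy
      haveI := hrpo
      obtain ⟨s, hslin, hsext⟩ := extend_partialOrder r
      refine ⟨s, hslin, fun a b h => hsext a b (Or.inl h), fun _ hsxy => ?_⟩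
      have hsyx : s y x := hsext y x (Or.inr ⟨hpo.refl y, hpo.refl x⟩)
      haveI := hslin
      have : x = y := antisymm hsxy hsyx
      exact hxy (this ▸ hpo.refl x)
  choose F hFlin hFext hFrev using key
  let e := (Fintype.equivFin (X × X)).symm
  refine ⟨Fintype.card (X × X), fun i => F (e i), fun v => ∀ i, v i,
    fun i => hFlin _, fun x y => ?_⟩
  constructor
  · intro h i; exact hFext _ _ _ h
  · intro h
    by_contra hxy
    have h2 : F (e (e.symm (x, y))) x y := h (e.symm (x, y))
    rw [Equiv.apply_symm_apply] at h2
    exact hFrev (x, y) hxy h2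

lemma pad_boolean_realizer (le : X → X → Prop) (hpo : IsPartialOrder X le) {k d : ℕ}
    (hk : k ≤ d)
    (h : ∃ (L : Fin k → X → X → Prop) (φ : (Fin k → Prop) → Prop), IsBooleanRealizer le L φ) :
    ∃ (L : Fin d → X → X → Prop) (φ : (Fin d → Prop) → Prop), IsBooleanRealizer le L φ := by
  classical
  haveI := hpo
  obtain ⟨s₀, hs₀lin, _⟩ := extend_partialOrder le
  obtain ⟨L, φ, hlin, hiff⟩ := h
  refine ⟨fun i => if h : (i : ℕ) < k then L ⟨i, h⟩ else s₀,
    fun v => φ (fun j => v (Fin.castLE hk j)), fun i => ?_, fun x y => ?_⟩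
  · dsimp only; split
    · exact hlin _
    · exact hs₀lin
  · rw [hiff]
    have : (fun j : Fin k => L j x y) =
        fun j : Fin k => (if h : ((Fin.castLE hk j : Fin d) : ℕ) < k
          then L ⟨(Fin.castLE hk j : Fin d), h⟩ else s₀) x y := by
      funext j
      rw [dif_pos (by simpa using j.isLt)]
      rfl
    rw [this]

end Aux
/-- Let `G = (V, E)` be a finite acyclic directed graph and `≤` a partial
order on `E` such that for all consecutive edges `uv, vw, wx` one has `uv < wx` and
`uv ≰ vw`. If `≤` has a boolean realizer of size `d`, then the second arc digraph `G''`
of `G` (vertices: directed paths `uvw` of length 2; `uvw` adjacent to `vwx`) has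
chromatic number at most `2 ^ d`. Consequently, if the chromatic number of `G''`
exceeds `2 ^ d`, then the boolean dimension of `(E, ≤)` exceeds `d`. -/
theorem second_arc_digraph_chromatic_of_boolean_realizer
    {V : Type*} [Fintype V] (E : V → V → Prop)
    (hacyc : ∀ v : V, ¬ Relation.TransGen E v v)
    (le : Edges E → Edges E → Prop) (hpo : IsPartialOrder (Edges E) le)
    (hpath : ∀ e f g : Edges E, e.1.2 = f.1.1 → f.1.2 = g.1.1 →
      le e g ∧ e ≠ g ∧ ¬ le e f)
    (d : ℕ) :
    ((∃ (L : Fin d → Edges E → Edges E → Prop) (φ : (Fin d → Prop) → Prop),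
        IsBooleanRealizer le L φ) →
      ∃ c : Paths2 E → Fin (2 ^ d),
        ∀ a b : Paths2 E, a.1.2 = b.1.1 → c a ≠ c b) ∧
    ((¬ ∃ c : Paths2 E → Fin (2 ^ d),
        ∀ a b : Paths2 E, a.1.2 = b.1.1 → c a ≠ c b) →
      d < booleanDimRel le) := by
  classical
  have main : (∃ (L : Fin d → Edges E → Edges E → Prop) (φ : (Fin d → Prop) → Prop),
      IsBooleanRealizer le L φ) →
      ∃ c : Paths2 E → Fin (2 ^ d),
        ∀ a b : Paths2 E, a.1.2 = b.1.1 → c a ≠ c b := by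
    rintro ⟨L, φ, hbr⟩
    let enc : (Fin d → Bool) ≃ Fin (2 ^ d) :=
      Fintype.equivFinOfCardEq (by simp)
    refine ⟨fun p => enc (fun i => decide (L i p.1.1 p.1.2)), ?_⟩
    intro a b hab hcab
    obtain ⟨hleg, hne, hnef⟩ := hpath a.1.1 a.1.2 b.1.2 a.2 (by rw [hab]; exact b.2)
    have hvec := enc.injective hcab
    have heq : ∀ i, L i a.1.1 a.1.2 ↔ L i a.1.2 b.1.2 := by
      intro i
      have := congrFun hvec i
      rw [← hab] at this
      exact decide_eq_decide.mp this
    exact aux_vec hbr hleg hne hnef heq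
  refine ⟨main, fun hnc => ?_⟩
  by_contra hlt
  push_neg at hlt
  haveI : Finite (Edges E) := by unfold Edges; infer_instance
  obtain ⟨t, L0, φ0, h0⟩ := exists_boolean_realizer le hpo
  have hSne : {d : ℕ | ∃ (L : Fin d → Edges E → Edges E → Prop)
      (φ : (Fin d → Prop) → Prop), IsBooleanRealizer le L φ}.Nonempty := ⟨t, L0, φ0, h0⟩
  have hmem := Nat.sInf_mem hSne
  have hk : booleanDimRel le ≤ d := hlt
  exact hnc (main (pad_boolean_realizer le hpo hk hmem))
end
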